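/- Let G be a simple graph with n vertices, no isolated vertices, maximum degree Δ, let p ≠ 0 be a real number, and let ξ_1 be the largest eigenvalue of the p-Sombor matrix S_p(G). Then n ξ_1² / (2^{1+1/p} Δ (n−1)) ≤ SO_p(G) ≤ n ξ_1 / 2; moreover the right-hand equality holds if G is a regular graph and the left-hand equality holds if G is the complete graph K_n. -/

import Mathlib

open Finset

section aux
open Matrix

lemma mySum_eig {m : ℕ} (A : Matrix (Fin m) (Fin m) ℝ) (hA : A.IsHermitian) :
    ∑ i, hA.eigenvalues i = A.trace := by
  conv_rhs => rw [hA.spectral_theorem, Unitary.conjStarAlgAut_apply]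
  rw [Matrix.trace_mul_comm, ← Matrix.mul_assoc,
    Matrix.mem_unitaryGroup_iff'.mp hA.eigenvectorUnitary.2, Matrix.one_mul,
    Matrix.trace_diagonal]
  simp

lemma mySum_eig_sq {m : ℕ} (A : Matrix (Fin m) (Fin m) ℝ) (hA : A.IsHermitian) :
    ∑ i, (hA.eigenvalues i) ^ 2 = (A * A).trace := by
  conv_rhs => rw [hA.spectral_theorem, Unitary.conjStarAlgAut_apply]
  rw [show ∀ U D V : Matrix (Fin m) (Fin m) ℝ, (U*D*V)*(U*D*V) = U*(D*((V*U)*(D*V))) by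
    intros; noncomm_ring]
  rw [Matrix.mem_unitaryGroup_iff'.mp hA.eigenvectorUnitary.2, Matrix.one_mul,
    Matrix.trace_mul_comm, ← Matrix.mul_assoc, Matrix.mul_assoc,
    Matrix.mem_unitaryGroup_iff'.mp hA.eigenvectorUnitary.2, Matrix.mul_one,
    Matrix.diagonal_mul_diagonal, Matrix.trace_diagonal]
  simp [sq]

lemma myRayleigh {m : ℕ} (A : Matrix (Fin m) (Fin m) ℝ) (hA : A.IsHermitian) (ξ : ℝ)
    (hmax : ∀ i, hA.eigenvalues i ≤ ξ) (x : Fin m → ℝ) :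
    x ⬝ᵥ (A *ᵥ x) ≤ ξ * (x ⬝ᵥ x) := by
  set U : Matrix (Fin m) (Fin m) ℝ := (hA.eigenvectorUnitary : Matrix (Fin m) (Fin m) ℝ) with hU
  set y := star U *ᵥ x with hy
  have hsU : star U = Uᵀ := by
    rw [Matrix.star_eq_conjTranspose, Matrix.conjTranspose_eq_transpose_of_trivial]
  have hdot : ∀ z, x ⬝ᵥ (U *ᵥ z) = y ⬝ᵥ z := by
    intro z
    rw [Matrix.dotProduct_mulVec, hy, hsU, Matrix.mulVec_transpose]
  have h1 : x ⬝ᵥ (A *ᵥ x) = ∑ i, hA.eigenvalues i * (y i) ^ 2 := by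
    conv_lhs => rw [hA.spectral_theorem, Unitary.conjStarAlgAut_apply, ← Matrix.mulVec_mulVec, ← Matrix.mulVec_mulVec,
      hdot]
    simp [dotProduct, Matrix.mulVec_diagonal, ← hy]
    ring_nf
    simp [sq, mul_comm, mul_assoc]
    exact Finset.sum_congr rfl fun i _ => by change y i * _ = _; ring
  have h2 : x ⬝ᵥ x = ∑ i, (y i) ^ 2 := by
    have hx : U *ᵥ y = x := by
      rw [hy, Matrix.mulVec_mulVec, Matrix.mem_unitaryGroup_iff.mp hA.eigenvectorUnitary.2,
        Matrix.one_mulVec]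
    have h3 := hdot y
    rw [hx] at h3
    rw [h3]
    simp [dotProduct, sq]
  rw [h1, h2, Finset.mul_sum]
  exact Finset.sum_le_sum fun i _ => mul_le_mul_of_nonneg_right (hmax i) (sq_nonneg _)

lemma myHasEig {m : ℕ} (A : Matrix (Fin m) (Fin m) ℝ) (hA : A.IsHermitian) (j : Fin m) :
    Module.End.HasEigenvalue (Matrix.toLin' A) (hA.eigenvalues j) := by
  apply Module.End.hasEigenvalue_of_hasEigenvector (x := ⇑(hA.eigenvectorBasis j))
  constructor
  · rw [Module.End.mem_eigenspace_iff, Matrix.toLin'_apply]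
    exact hA.mulVec_eigenvectorBasis j
  · intro h
    apply hA.eigenvectorBasis.toBasis.ne_zero j
    rw [OrthonormalBasis.coe_toBasis]
    simpa using h

lemma weight_eq (p a : ℝ) (hp : p ≠ 0) (ha : 0 < a) :
    (a ^ p + a ^ p) ^ (1 / p) = (2 : ℝ) ^ (1 / p) * a := by
  rw [← two_mul, Real.mul_rpow (by norm_num) (Real.rpow_nonneg ha.le p),
    ← Real.rpow_mul ha.le, mul_one_div_cancel hp, Real.rpow_one]

lemma weight_le (p a b M : ℝ) (hp : p ≠ 0) (ha : 0 < a) (hb : 0 < b)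
    (haM : a ≤ M) (hbM : b ≤ M) :
    (a ^ p + b ^ p) ^ (1 / p) ≤ (2 : ℝ) ^ (1 / p) * M := by
  have hM : 0 < M := ha.trans_le haM
  have hkey : ((2 : ℝ) * M ^ p) ^ (1 / p) = (2 : ℝ) ^ (1 / p) * M := by
    rw [Real.mul_rpow (by norm_num) (Real.rpow_nonneg hM.le p),
      ← Real.rpow_mul hM.le, mul_one_div_cancel hp, Real.rpow_one]
  rcases lt_or_gt_of_ne hp with hneg | hpos
  · have h1 : M ^ p ≤ a ^ p := Real.rpow_le_rpow_of_nonpos ha haM hneg.le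
    have h2 : M ^ p ≤ b ^ p := Real.rpow_le_rpow_of_nonpos hb hbM hneg.le
    have h3 : (2 : ℝ) * M ^ p ≤ a ^ p + b ^ p := by linarith
    rw [← hkey]
    exact Real.rpow_le_rpow_of_nonpos (by positivity) h3
      (le_of_lt (by exact div_neg_of_pos_of_neg one_pos hneg))
  · have h1 : a ^ p ≤ M ^ p := Real.rpow_le_rpow ha.le haM hpos.le
    have h2 : b ^ p ≤ M ^ p := Real.rpow_le_rpow hb.le hbM hpos.le
    have h3 : a ^ p + b ^ p ≤ (2 : ℝ) * M ^ p := by linarith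
    rw [← hkey]
    exact Real.rpow_le_rpow (by positivity) h3 (by positivity)

end aux

/-- The `p`-Sombor matrix of a simple graph `G` on vertices `{0, …, n-1}`:
its `(i,j)` entry is `((d i)^p + (d j)^p)^(1/p)` when `i ~ j`, and `0` otherwise. -/
noncomputable def somborMatrix (n : ℕ) (G : SimpleGraph (Fin n)) [DecidableRel G.Adj]
    (p : ℝ) : Matrix (Fin n) (Fin n) ℝ :=
  Matrix.of fun i j =>
    if G.Adj i j then ((G.degree i : ℝ) ^ p + (G.degree j : ℝ) ^ p) ^ (1 / p) else 0

/-- Sum of a symmetric weight `f` over the edges of `G`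
(each unordered edge counted once). -/
noncomputable def edgeSum (n : ℕ) (G : SimpleGraph (Fin n)) [DecidableRel G.Adj]
    (f : Fin n → Fin n → ℝ) : ℝ :=
  (1 / 2) * ∑ i, ∑ j, if G.Adj i j then f i j else 0

/-- The `p`-Sombor index `SO_p(G) = ∑_{ij ∈ E(G)} ((d i)^p + (d j)^p)^(1/p)`. -/
noncomputable def somborIndex (n : ℕ) (G : SimpleGraph (Fin n)) [DecidableRel G.Adj]
    (p : ℝ) : ℝ :=
  edgeSum n G fun i j => ((G.degree i : ℝ) ^ p + (G.degree j : ℝ) ^ p) ^ (1 / p)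


theorem somborIndex_spectral_radius_bounds (n : ℕ) (G : SimpleGraph (Fin n))
    [DecidableRel G.Adj] (hdeg : ∀ i : Fin n, 0 < G.degree i) (p : ℝ) (hp : p ≠ 0)
    (hH : (somborMatrix n G p).IsHermitian) (ξ₁ : ℝ)
    (hmem : ∃ i, hH.eigenvalues i = ξ₁) (hmax : ∀ i, hH.eigenvalues i ≤ ξ₁) :
    ((n : ℝ) * ξ₁ ^ 2 / ((2 : ℝ) ^ (1 + 1 / p) * (G.maxDegree : ℝ) * ((n : ℝ) - 1)) ≤
        somborIndex n G p ∧
      somborIndex n G p ≤ (n : ℝ) * ξ₁ / 2) ∧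
    ((∃ k, G.IsRegularOfDegree k) → somborIndex n G p = (n : ℝ) * ξ₁ / 2) ∧
    (G = ⊤ →
      (n : ℝ) * ξ₁ ^ 2 / ((2 : ℝ) ^ (1 + 1 / p) * (G.maxDegree : ℝ) * ((n : ℝ) - 1)) =
        somborIndex n G p) := by
  classical
  obtain ⟨j₀, hj₀⟩ := hmem
  set S := somborMatrix n G p with hSdef
  obtain ⟨w₀, hw₀⟩ := (G.degree_pos_iff_exists_adj j₀).mp (hdeg j₀)
  have hn2 : 2 ≤ n := by
    have : Nontrivial (Fin n) := ⟨⟨j₀, w₀, G.ne_of_adj hw₀⟩⟩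
    have := Fintype.one_lt_card (α := Fin n)
    simp at this; omega
  have hnR : (2:ℝ) ≤ (n:ℝ) := by exact_mod_cast hn2
  have hΔn : 0 < G.maxDegree := lt_of_lt_of_le (hdeg j₀) (G.degree_le_maxDegree j₀)
  have hΔ : (1:ℝ) ≤ (G.maxDegree : ℝ) := by exact_mod_cast hΔn
  have hdegR : ∀ i, (0:ℝ) < (G.degree i : ℝ) := fun i => by exact_mod_cast hdeg i
  have hdegΔ : ∀ i, (G.degree i : ℝ) ≤ (G.maxDegree : ℝ) := fun i => by
    exact_mod_cast G.degree_le_maxDegree i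
  set c2 : ℝ := (2:ℝ) ^ (1/p) with hc2
  have hc2pos : 0 < c2 := Real.rpow_pos_of_pos two_pos _
  have h2pow : (2:ℝ) ^ (1 + 1/p) = 2 * c2 := by
    rw [hc2, Real.rpow_add two_pos, Real.rpow_one]
  -- entry facts
  have hSnn : ∀ i j, 0 ≤ S i j := by
    intro i j
    simp only [hSdef, somborMatrix, Matrix.of_apply]
    split
    · exact Real.rpow_nonneg (by positivity) _
    · exact le_refl 0
  have hSle : ∀ i j, S i j ≤ c2 * (G.maxDegree : ℝ) := by
    intro i j
    simp only [hSdef, somborMatrix, Matrix.of_apply]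
    split
    · exact weight_le p _ _ _ hp (hdegR i) (hdegR j) (hdegΔ i) (hdegΔ j)
    · positivity
  have hSdiag : ∀ i, S i i = 0 := by
    intro i
    simp [hSdef, somborMatrix]
  have hSsymm : ∀ i j, S j i = S i j := by
    intro i j
    by_cases h : G.Adj i j
    · have h' : G.Adj j i := h.symm
      simp [hSdef, somborMatrix, h, h', add_comm]
    · have h' : ¬ G.Adj j i := fun hc => h hc.symm
      simp [hSdef, somborMatrix, h, h']
  have hSsum : ∑ i, ∑ j, S i j = 2 * somborIndex n G p := by
    simp only [somborIndex, edgeSum, hSdef, somborMatrix, Matrix.of_apply]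
    ring
  -- eigenvalue facts
  have htr : ∑ i, hH.eigenvalues i = 0 := by
    rw [mySum_eig _ hH, Matrix.trace]
    simp only [Matrix.diag]
    exact Finset.sum_eq_zero fun i _ => hSdiag i
  have hT : ∑ i, (hH.eigenvalues i) ^ 2 = ∑ i, ∑ j, (S i j) ^ 2 := by
    rw [mySum_eig_sq _ hH, Matrix.trace]
    simp only [Matrix.diag, Matrix.mul_apply]
    exact Finset.sum_congr rfl fun i _ => Finset.sum_congr rfl fun j _ => by
      rw [hSsymm i j, sq]
  have hξ0 : 0 ≤ ξ₁ := by
    by_contra hlt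
    push_neg at hlt
    have h1 : ∑ i, hH.eigenvalues i ≤ ∑ _i : Fin n, ξ₁ :=
      Finset.sum_le_sum fun i _ => hmax i
    rw [htr, Finset.sum_const, Finset.card_univ, Fintype.card_fin, nsmul_eq_mul] at h1
    nlinarith
  -- Rayleigh with the all-ones vector
  have hray : 2 * somborIndex n G p ≤ ξ₁ * n := by
    have h := myRayleigh S hH ξ₁ hmax (fun _ => 1)
    simp only [dotProduct, Matrix.mulVec, mul_one, one_mul, Finset.sum_const,
      Finset.card_univ, Fintype.card_fin, nsmul_eq_mul] at h
    rw [← hSsum]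
    simpa [dotProduct] using h
  -- Cauchy-Schwarz on eigenvalues
  have hξsum : ∑ i ∈ univ.erase j₀, hH.eigenvalues i = -ξ₁ := by
    rw [Finset.sum_erase_eq_sub (mem_univ j₀), htr, hj₀]
    ring
  have hcs := sq_sum_le_card_mul_sum_sq (s := univ.erase j₀) (f := hH.eigenvalues)
  rw [hξsum, Finset.card_erase_of_mem (mem_univ j₀), Finset.card_univ, Fintype.card_fin,
    Finset.sum_erase_eq_sub (mem_univ j₀) (f := fun i => (hH.eigenvalues i)^2), hj₀] at hcs
  have hcast : ((n - 1 : ℕ) : ℝ) = (n:ℝ) - 1 := by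
    have h1 : 1 ≤ n := by omega
    push_cast [h1]
    ring
  rw [hcast, neg_pow] at hcs
  have key1 : (n:ℝ) * ξ₁ ^ 2 ≤ ((n:ℝ) - 1) * ∑ i, (hH.eigenvalues i) ^ 2 := by
    nlinarith [hcs]
  have key2 : ∑ i, ∑ j, (S i j) ^ 2 ≤ (c2 * (G.maxDegree : ℝ)) * (2 * somborIndex n G p) := by
    rw [← hSsum, Finset.mul_sum]
    refine Finset.sum_le_sum fun i _ => ?_
    rw [Finset.mul_sum]
    refine Finset.sum_le_sum fun j _ => ?_
    rw [sq]
    exact mul_le_mul_of_nonneg_right (hSle i j) (hSnn i j)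
  have hSO0 : 0 ≤ somborIndex n G p := by
    have : 0 ≤ ∑ i, ∑ j, S i j :=
      Finset.sum_nonneg fun i _ => Finset.sum_nonneg fun j _ => hSnn i j
    rw [hSsum] at this
    linarith
  have hden : 0 < (2:ℝ) ^ (1 + 1/p) * (G.maxDegree : ℝ) * ((n:ℝ) - 1) := by
    rw [h2pow]
    have : (0:ℝ) < (n:ℝ) - 1 := by linarith
    positivity
  -- the regular-graph computation
  have hmain : ∀ k : ℕ, G.IsRegularOfDegree k →
      somborIndex n G p = (n:ℝ) * (c2 * (k:ℝ) ^ 2) / 2 ∧ ξ₁ = c2 * (k:ℝ) ^ 2 := by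
    intro k hreg
    have hk0 : 0 < k := by rw [← hreg j₀]; exact hdeg j₀
    have hkR : (0:ℝ) < (k:ℝ) := by exact_mod_cast hk0
    have hrow : ∀ i, ∑ j, S i j = c2 * (k:ℝ) ^ 2 := by
      intro i
      have hSij : ∀ j, S i j = if G.Adj i j then c2 * (k:ℝ) else 0 := by
        intro j
        by_cases h : G.Adj i j
        · simp only [hSdef, somborMatrix, Matrix.of_apply, h, if_true, hreg i, hreg j]
          exact weight_eq p (k:ℝ) hp hkR
        · simp [hSdef, somborMatrix, h]
      simp only [hSij]
      rw [← Finset.sum_filter, Finset.sum_const, ← SimpleGraph.neighborFinset_eq_filter]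
      have : (G.neighborFinset i).card = k := hreg i
      rw [this, nsmul_eq_mul]
      ring
    have hSOv : 2 * somborIndex n G p = (n:ℝ) * (c2 * (k:ℝ) ^ 2) := by
      rw [← hSsum]
      simp only [hrow]
      rw [Finset.sum_const, Finset.card_univ, Fintype.card_fin, nsmul_eq_mul]
    have hup : ξ₁ ≤ c2 * (k:ℝ) ^ 2 := by
      have hev := myHasEig S hH j₀
      rw [hj₀] at hev
      obtain ⟨i0, hball⟩ := eigenvalue_mem_ball hev
      rw [Metric.mem_closedBall, Real.dist_eq, hSdiag i0, sub_zero] at hball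
      have h2 : ∑ j ∈ univ.erase i0, ‖S i0 j‖ ≤ c2 * (k:ℝ) ^ 2 := by
        calc ∑ j ∈ univ.erase i0, ‖S i0 j‖
            ≤ ∑ j, ‖S i0 j‖ := Finset.sum_le_sum_of_subset_of_nonneg
              (Finset.subset_univ _) (fun j _ _ => norm_nonneg _)
          _ = ∑ j, S i0 j := Finset.sum_congr rfl fun j _ => by
              rw [Real.norm_eq_abs, abs_of_nonneg (hSnn i0 j)]
          _ = c2 * (k:ℝ) ^ 2 := hrow i0
      exact le_trans (le_abs_self ξ₁) (le_trans hball h2)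
    have hlow : c2 * (k:ℝ) ^ 2 ≤ ξ₁ := by
      rw [hSOv] at hray
      have hn0 : (0:ℝ) < (n:ℝ) := by linarith
      nlinarith [hray]
    have hξ : ξ₁ = c2 * (k:ℝ) ^ 2 := le_antisymm hup hlow
    exact ⟨by linarith [hSOv], hξ⟩
  refine ⟨⟨?_, by linarith [hray]⟩, ?_, ?_⟩
  · rw [div_le_iff₀ hden]
    calc (n:ℝ) * ξ₁ ^ 2 ≤ ((n:ℝ) - 1) * ∑ i, (hH.eigenvalues i) ^ 2 := key1
      _ = ((n:ℝ) - 1) * ∑ i, ∑ j, (S i j) ^ 2 := by rw [hT]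
      _ ≤ ((n:ℝ) - 1) * ((c2 * (G.maxDegree : ℝ)) * (2 * somborIndex n G p)) := by
          apply mul_le_mul_of_nonneg_left key2 (by linarith)
      _ = somborIndex n G p * ((2:ℝ) ^ (1 + 1/p) * (G.maxDegree : ℝ) * ((n:ℝ) - 1)) := by
          rw [h2pow]; ring
  · rintro ⟨k, hreg⟩
    obtain ⟨hSO, hξ⟩ := hmain k hreg
    rw [hSO, hξ]
  · intro hG
    have hadj : ∀ a b : Fin n, G.Adj a b ↔ a ≠ b := by
      intro a b
      rw [hG]
      simp
    have hreg : G.IsRegularOfDegree (n - 1) := by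
      intro v
      have hnb : G.neighborFinset v = univ.erase v := by
        ext w
        simp [SimpleGraph.mem_neighborFinset, hadj, ne_comm]
      rw [SimpleGraph.degree, hnb, Finset.card_erase_of_mem (mem_univ v), Finset.card_univ,
        Fintype.card_fin]
    obtain ⟨hSO, hξ⟩ := hmain (n - 1) hreg
    have hmd : G.maxDegree = n - 1 :=
      le_antisymm (SimpleGraph.maxDegree_le_of_forall_degree_le _ _ fun v => (hreg v).le)
        (by rw [← hreg j₀]; exact G.degree_le_maxDegree j₀)
    have hK : (1:ℝ) ≤ ((n - 1 : ℕ) : ℝ) := by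
      rw [hcast]; linarith
    have hKpos : (0:ℝ) < (n:ℝ) - 1 := by linarith
    rw [hSO, hξ, hmd, h2pow, hcast]
    rw [div_eq_iff (ne_of_gt (mul_pos (mul_pos (mul_pos two_pos hc2pos) hKpos) hKpos))]
    ring
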